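/- Suppose every set of m points in general position in the plane contains ⌊(log₂ m)/2⌋ points in convex position. Then every set P of n points in general position in the plane (n > 16) admits a separating family of convex sets of cardinality at most 20 n log₂ log₂ n / log₂ n. -/

import Mathlib

/-- Points of the plane. -/
abbrev Pt := ℝ × ℝ

/-- A family `F` of planar sets separates a finite point set `P` if for every
pair of distinct points of `P` some member of `F` contains exactly one of them. -/
def SepPts (F : Finset (Set Pt)) (P : Finset Pt) : Prop :=
  ∀ x ∈ P, ∀ y ∈ P, x ≠ y → ∃ S ∈ F, (x ∈ S ↔ y ∉ S)

/-- A (closed) halfplane. -/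
def IsHalfplane (S : Set Pt) : Prop :=
  ∃ u : Pt, ∃ c : ℝ, u ≠ 0 ∧ S = {p : Pt | p.1 * u.1 + p.2 * u.2 ≤ c}

/-- A closed disc of positive radius. -/
def IsClosedDisc (S : Set Pt) : Prop :=
  ∃ q : Pt, ∃ r : ℝ, 0 < r ∧ S = Metric.closedBall q r

/-- A finite point set is in general position if no three of its points are
collinear. -/
def GenPos (P : Finset Pt) : Prop :=
  ∀ a ∈ P, ∀ b ∈ P, ∀ c ∈ P, a ≠ b → a ≠ c → b ≠ c → ¬ Collinear ℝ ({a, b, c} : Set Pt)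

/-- A finite point set is in convex position if each of its points is an
extreme point of the convex hull, i.e. lies outside the hull of the others. -/
def ConvexPos (Q : Finset Pt) : Prop :=
  ∀ q ∈ Q, q ∉ convexHull ℝ (↑(Q.erase q) : Set Pt)

/-- A finite point set lying on a circle. -/
def OnCircle (P : Finset Pt) : Prop :=
  ∃ q : Pt, ∃ r : ℝ, 0 < r ∧ ∀ x ∈ P, dist x q = r



section Helpers

open scoped Classical

lemma genPos_mono {T P : Finset Pt} (h : T ⊆ P) (hP : GenPos P) : GenPos T :=
  fun a ha b hb c hc hab hac hbc => hP a (h ha) b (h hb) c (h hc) hab hac hbc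

lemma convexPos_mono {Q' Q : Finset Pt} (h : Q' ⊆ Q) (hQ : ConvexPos Q) : ConvexPos Q' := by
  intro q hq hmem
  exact hQ q (h hq) (convexHull_mono (by exact_mod_cast Finset.erase_subset_erase q h) hmem)

lemma key_not_mem_hull {Q : Finset Pt} (hQ : ConvexPos Q) {q : Pt} (hq : q ∈ Q)
    {S : Finset Pt} (hSsub : (S : Set Pt) ⊆ convexHull ℝ (Q : Set Pt)) (hqS : q ∉ S) :
    q ∉ convexHull ℝ (S : Set Pt) := by
  have hclosed : IsClosed (convexHull ℝ (↑(Q.erase q) : Set Pt)) :=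
    Set.Finite.isClosed_convexHull (𝕜 := ℝ) (Q.erase q).finite_toSet
  obtain ⟨f, u, hfu, huq⟩ :=
    geometric_hahn_banach_closed_point (convex_convexHull ℝ _) hclosed (hQ q hq)
  have hQins : (Q : Set Pt) = insert q (↑(Q.erase q) : Set Pt) := by
    rw [← Finset.coe_insert, Finset.insert_erase hq]
  have hlt : ∀ s ∈ (S : Set Pt), s ∈ {y : Pt | f y < f q} := by
    intro s hs
    have hsne : s ≠ q := fun h => hqS (h ▸ hs)
    have hsQ : s ∈ convexHull ℝ (insert q (↑(Q.erase q) : Set Pt)) := by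
      rw [← hQins]; exact hSsub hs
    rcases (Q.erase q).eq_empty_or_nonempty with he | hne
    · rw [he] at hsQ
      simp only [Finset.coe_empty, LawfulSingleton.insert_empty_eq, convexHull_singleton,
        Set.mem_singleton_iff] at hsQ
      exact absurd hsQ hsne
    · rw [convexHull_insert (Finset.coe_nonempty.2 hne)] at hsQ
      rw [mem_convexJoin] at hsQ
      obtain ⟨q', hq', z, hz, hseg⟩ := hsQ
      rw [Set.mem_singleton_iff] at hq'
      rw [hq'] at hseg
      obtain ⟨a, b, ha, hb, hab, habs⟩ := hseg
      have hfz : f z < u := hfu z hz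
      have hfzq : f z < f q := hfz.trans huq
      rcases eq_or_lt_of_le hb with hb0 | hbpos
      · exfalso
        have : a = 1 := by linarith
        apply hsne
        rw [← habs, ← hb0, this]; simp
      · have ha1 : a = 1 - b := by linarith
        have : f s = (1 - b) * f q + b * f z := by
          rw [← habs, ha1]; simp [mul_comm]
        have : f s < f q := by
          rw [this]
          nlinarith [mul_pos hbpos (sub_pos.2 hfzq)]
        exact this
  intro hmem
  have := convexHull_min hlt (convex_halfSpace_lt ⟨f.map_add, f.map_smul⟩ (f q)) hmem
  simp at this

lemma testbit_diff {a b c : ℕ} (hab : a ≠ b) (ha : a < 2^c) (hb : b < 2^c) :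
    ∃ i < c, Nat.testBit a i ≠ Nat.testBit b i := by
  by_contra h
  push_neg at h
  apply hab
  apply Nat.eq_of_testBit_eq
  intro i
  by_cases hi : i < c
  · exact h i hi
  · rw [Nat.testBit_lt_two_pow (lt_of_lt_of_le ha (Nat.pow_le_pow_right (by norm_num) (le_of_not_gt hi))),
        Nat.testBit_lt_two_pow (lt_of_lt_of_le hb (Nat.pow_le_pow_right (by norm_num) (le_of_not_gt hi)))]

lemma extract (P : Finset Pt) (k : ℕ) (hk : 0 < k)
    (hex : ∀ T : Finset Pt, T ⊆ P → 2^(2*k) ≤ T.card → ∃ Q ⊆ T, Q.card = k ∧ ConvexPos Q) :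
    ∀ N (T : Finset Pt), T.card ≤ N → T ⊆ P →
      ∃ (𝒬 : Finset (Finset Pt)) (R : Finset Pt),
        (∀ Q ∈ 𝒬, Q ⊆ T ∧ Q.card = k ∧ ConvexPos Q) ∧
        (∀ Q ∈ 𝒬, ∀ Q' ∈ 𝒬, Q ≠ Q' → Disjoint Q Q') ∧
        R ⊆ T ∧ R.card < 2^(2*k) ∧
        (∀ x ∈ T, x ∈ R ∨ ∃ Q ∈ 𝒬, x ∈ Q) := by
  intro N
  induction N with
  | zero =>
    intro T hT _
    refine ⟨∅, ∅, by simp, by simp, by simp, by positivity, ?_⟩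
    intro x hx
    rw [Nat.le_zero, Finset.card_eq_zero] at hT
    simp [hT] at hx
  | succ N ih =>
    intro T hT hTP
    by_cases hbig : 2^(2*k) ≤ T.card
    · obtain ⟨Q, hQT, hQcard, hQpos⟩ := hex T hTP hbig
      have hQne : Q.Nonempty := Finset.card_pos.1 (hQcard ▸ hk)
      have hcard' : (T \ Q).card ≤ N := by
        have h1 : (T \ Q).card = T.card - k := by
          rw [Finset.card_sdiff_of_subset hQT, hQcard]
        have h2 : 1 ≤ T.card := le_trans (Nat.one_le_two_pow) hbig
        omega
      obtain ⟨𝒬', R, hprops, hdisj, hRsub, hRcard, hcov⟩ :=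
        ih (T \ Q) hcard' (Finset.Subset.trans (Finset.sdiff_subset) hTP)
      refine ⟨insert Q 𝒬', R, ?_, ?_, hRsub.trans Finset.sdiff_subset, hRcard, ?_⟩
      · intro Q' hQ'
        rcases Finset.mem_insert.1 hQ' with rfl | h
        · exact ⟨hQT, hQcard, hQpos⟩
        · exact ⟨(hprops Q' h).1.trans Finset.sdiff_subset, (hprops Q' h).2⟩
      · intro Q1 h1 Q2 h2 hne
        rcases Finset.mem_insert.1 h1 with rfl | h1' <;>
          rcases Finset.mem_insert.1 h2 with rfl | h2'
        · exact absurd rfl hne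
        · rw [Finset.disjoint_right]
          intro a ha
          exact (Finset.mem_sdiff.1 ((hprops Q2 h2').1 ha)).2
        · rw [Finset.disjoint_left]
          intro a ha
          exact (Finset.mem_sdiff.1 ((hprops Q1 h1').1 ha)).2
        · exact hdisj Q1 h1' Q2 h2' hne
      · intro x hx
        by_cases hxQ : x ∈ Q
        · exact Or.inr ⟨Q, Finset.mem_insert_self _ _, hxQ⟩
        · rcases hcov x (Finset.mem_sdiff.2 ⟨hx, hxQ⟩) with h | ⟨Q', hQ', hxQ'⟩
          · exact Or.inl h
          · exact Or.inr ⟨Q', Finset.mem_insert_of_mem hQ', hxQ'⟩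
    · exact ⟨∅, T, by simp, by simp, Finset.Subset.refl T, by omega, fun x hx => Or.inl hx⟩




noncomputable def idx (Q : Finset Pt) (p : Pt) : ℕ :=
  if h : p ∈ Q then (Q.equivFin ⟨p, h⟩ : ℕ) else 0

lemma idx_lt {Q : Finset Pt} {p : Pt} (h : p ∈ Q) : idx Q p < Q.card := by
  rw [idx, dif_pos h]; exact (Q.equivFin ⟨p, h⟩).2

lemma idx_inj {Q : Finset Pt} {p q : Pt} (hp : p ∈ Q) (hq : q ∈ Q)
    (h : idx Q p = idx Q q) : p = q := by
  rw [idx, dif_pos hp, idx, dif_pos hq] at h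
  exact Subtype.ext_iff.1 (Q.equivFin.injective (Fin.val_injective h))

noncomputable def innerPts (P Q : Finset Pt) : Finset Pt :=
  P.filter (fun p => p ∉ Q ∧ p ∈ convexHull ℝ (Q : Set Pt))

noncomputable def groupFam (P Q : Finset Pt) (c : ℕ) : Finset (Set Pt) :=
  {convexHull ℝ (Q : Set Pt), convexHull ℝ ((innerPts P Q : Finset Pt) : Set Pt)}
  ∪ (Finset.range c).image (fun i =>
      convexHull ℝ ((Q.filter (fun p => Nat.testBit (idx Q p) i) : Finset Pt) : Set Pt))

lemma hull_mem_groupFam (P Q : Finset Pt) (c : ℕ) :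
    convexHull ℝ (Q : Set Pt) ∈ groupFam P Q c :=
  Finset.mem_union_left _ (Finset.mem_insert_self _ _)

lemma innerHull_mem_groupFam (P Q : Finset Pt) (c : ℕ) :
    convexHull ℝ ((innerPts P Q : Finset Pt) : Set Pt) ∈ groupFam P Q c :=
  Finset.mem_union_left _ (Finset.mem_insert_of_mem (Finset.mem_singleton_self _))

lemma groupFam_sep_out {P Q : Finset Pt} (hQpos : ConvexPos Q) (c : ℕ)
    {x y : Pt} (hx : x ∈ Q) (hy : y ∈ P) (hyQ : y ∉ Q) :
    ∃ S ∈ groupFam P Q c, (x ∈ S ↔ y ∉ S) := by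
  by_cases hyh : y ∈ convexHull ℝ (Q : Set Pt)
  · refine ⟨convexHull ℝ ((innerPts P Q : Finset Pt) : Set Pt),
      innerHull_mem_groupFam P Q c, ?_⟩
    have hxnot : x ∉ convexHull ℝ ((innerPts P Q : Finset Pt) : Set Pt) := by
      apply key_not_mem_hull hQpos hx
      · intro p hp
        rw [Finset.mem_coe, innerPts, Finset.mem_filter] at hp
        exact hp.2.2
      · intro hmem
        exact (Finset.mem_filter.1 hmem).2.1 hx
    have hyin : y ∈ convexHull ℝ ((innerPts P Q : Finset Pt) : Set Pt) := by
      apply subset_convexHull ℝ _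
      rw [Finset.mem_coe, innerPts, Finset.mem_filter]
      exact ⟨hy, hyQ, hyh⟩
    exact iff_of_false hxnot (not_not.2 hyin)
  · exact ⟨convexHull ℝ (Q : Set Pt), hull_mem_groupFam P Q c,
      iff_of_true (subset_convexHull ℝ _ hx) hyh⟩

lemma groupFam_sep_in {P Q : Finset Pt} (hQpos : ConvexPos Q) {c : ℕ} (hc : Q.card ≤ 2^c)
    {x y : Pt} (hx : x ∈ Q) (hy : y ∈ Q) (hxy : x ≠ y) :
    ∃ S ∈ groupFam P Q c, (x ∈ S ↔ y ∉ S) := by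
  have hne : idx Q x ≠ idx Q y := fun h => hxy (idx_inj hx hy h)
  obtain ⟨i, hic, hbit⟩ := testbit_diff hne (lt_of_lt_of_le (idx_lt hx) hc)
    (lt_of_lt_of_le (idx_lt hy) hc)
  set B := Q.filter (fun p => Nat.testBit (idx Q p) i) with hB
  have hmemfam : convexHull ℝ (B : Set Pt) ∈ groupFam P Q c := by
    apply Finset.mem_union_right
    exact Finset.mem_image.2 ⟨i, Finset.mem_range.2 hic, rfl⟩
  have hin : ∀ z ∈ Q, Nat.testBit (idx Q z) i = true → z ∈ convexHull ℝ (B : Set Pt) := by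
    intro z hz hbz
    exact subset_convexHull ℝ _ (Finset.mem_coe.2 (Finset.mem_filter.2 ⟨hz, hbz⟩))
  have hnotin : ∀ z ∈ Q, Nat.testBit (idx Q z) i = false → z ∉ convexHull ℝ (B : Set Pt) := by
    intro z hz hbz hmem
    apply hQpos z hz
    apply convexHull_mono _ hmem
    intro p hp
    rw [Finset.mem_coe, Finset.mem_filter] at hp
    rw [Finset.coe_erase, Set.mem_diff]
    refine ⟨hp.1, ?_⟩
    rw [Set.mem_singleton_iff]
    intro h
    rw [h, hbz] at hp
    exact Bool.false_ne_true hp.2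
  cases hbx : Nat.testBit (idx Q x) i with
  | true =>
    cases hby : Nat.testBit (idx Q y) i with
    | true => rw [hbx, hby] at hbit; exact absurd rfl hbit
    | false => exact ⟨_, hmemfam, iff_of_true (hin x hx hbx) (hnotin y hy hby)⟩
  | false =>
    cases hby : Nat.testBit (idx Q y) i with
    | false => rw [hbx, hby] at hbit; exact absurd rfl hbit
    | true => exact ⟨_, hmemfam, iff_of_false (hnotin x hx hbx) (not_not.2 (hin y hy hby))⟩


lemma groupFam_card (P Q : Finset Pt) (c : ℕ) : (groupFam P Q c).card ≤ c + 2 := by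
  refine le_trans (Finset.card_union_le _ _) ?_
  have h1 : ({convexHull ℝ (Q : Set Pt), convexHull ℝ ((innerPts P Q : Finset Pt) : Set Pt)} :
      Finset (Set Pt)).card ≤ 2 := Finset.card_insert_le _ _ |>.trans (by simp)
  have h2 := Finset.card_image_le (s := Finset.range c)
    (f := fun i => convexHull ℝ ((Q.filter (fun p => Nat.testBit (idx Q p) i) : Finset Pt) : Set Pt))
  simp only [Finset.card_range] at h2
  omega

lemma groupFam_convex (P Q : Finset Pt) (c : ℕ) :
    ∀ A ∈ groupFam P Q c, Convex ℝ A := by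
  intro A hA
  rcases Finset.mem_union.1 hA with h | h
  · rcases Finset.mem_insert.1 h with rfl | h
    · exact convex_convexHull ℝ _
    · rw [Finset.mem_singleton] at h
      subst h; exact convex_convexHull ℝ _
  · obtain ⟨i, _, rfl⟩ := Finset.mem_image.1 h
    exact convex_convexHull ℝ _


open Real in


lemma logb_two_pow (m : ℕ) : Real.logb 2 ((2:ℝ)^m) = m := by
  rw [Real.logb_pow, Real.logb_self_eq_one (by norm_num)]
  ring

lemma arith_bound (n L k c g r : ℕ) (hn : 17 ≤ n) (hL : L = Nat.log 2 n) (hk : k = L / 4)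
    (hc : c = Nat.clog 2 k) (hg : k * g ≤ n) (hr : r < 2 ^ (2 * k)) :
    ((g * (c + 2) + r : ℕ) : ℝ) ≤ 20 * n * Real.logb 2 (Real.logb 2 n) / Real.logb 2 n := by
  have hL4 : 4 ≤ L := by
    rw [hL]
    have h16 : (2:ℕ)^4 ≤ n := by norm_num; omega
    exact (Nat.le_log_iff_pow_le (by norm_num) (by omega)).2 h16
  have hk1 : 1 ≤ k := by omega
  set x := Real.logb 2 n with hx
  set LL := Real.logb 2 x with hLL
  have hnpos : (0:ℝ) < n := by positivity
  -- L ≤ x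
  have h2Ln : (2:ℝ)^L ≤ n := by
    exact_mod_cast (hL ▸ Nat.pow_log_le_self 2 (by omega : n ≠ 0))
  have hLx : (L:ℝ) ≤ x := by
    calc (L:ℝ) = Real.logb 2 ((2:ℝ)^L) := (logb_two_pow L).symm
    _ ≤ x := Real.logb_le_logb_of_le (by norm_num) (by positivity) h2Ln
  -- x < L + 1
  have hnlt : (n:ℝ) < (2:ℝ)^(L+1) := by
    exact_mod_cast (hL ▸ Nat.lt_pow_succ_log_self (by norm_num : 1 < 2) n)
  have hxL1 : x < (L:ℝ) + 1 := by
    calc x < Real.logb 2 ((2:ℝ)^(L+1)) := Real.logb_lt_logb (by norm_num) hnpos hnlt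
    _ = (L:ℝ) + 1 := by rw [logb_two_pow]; push_cast; ring
  have hx4 : (4:ℝ) ≤ x := le_trans (by exact_mod_cast hL4) hLx
  have hxpos : (0:ℝ) < x := by linarith
  have hLL2 : (2:ℝ) ≤ LL := by
    calc (2:ℝ) = Real.logb 2 ((2:ℝ)^(2:ℕ)) := (logb_two_pow 2).symm
    _ ≤ LL := Real.logb_le_logb_of_le (by norm_num) (by norm_num) (by norm_num; linarith)
  -- k ≤ x / 4
  have h4k : (4 * k : ℕ) ≤ L := by omega
  have hkx : (k:ℝ) ≤ x / 4 := by
    have : (4:ℝ) * k ≤ x := le_trans (by exact_mod_cast h4k) hLx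
    linarith
  have hkpos : (0:ℝ) < k := by exact_mod_cast hk1
  -- c ≤ logb 2 k + 1
  have hck_nat : c ≤ Nat.log 2 k + 1 := by
    rw [hc]
    exact (Nat.clog_le_iff_le_pow (by norm_num)).2 (le_of_lt (Nat.lt_pow_succ_log_self (by norm_num) k))
  have hlogk_le : ((Nat.log 2 k : ℕ) : ℝ) ≤ Real.logb 2 k := by
    calc ((Nat.log 2 k : ℕ) : ℝ) = Real.logb 2 ((2:ℝ)^(Nat.log 2 k)) := (logb_two_pow _).symm
    _ ≤ Real.logb 2 k := Real.logb_le_logb_of_le (by norm_num) (by positivity)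
        (by exact_mod_cast Nat.pow_log_le_self 2 (by omega : k ≠ 0))
  have hlogk : Real.logb 2 (k:ℝ) ≤ LL - 2 := by
    have h1 : Real.logb 2 (k:ℝ) ≤ Real.logb 2 (x/4) :=
      Real.logb_le_logb_of_le (by norm_num) hkpos hkx
    have h2 : Real.logb 2 (x/4) = LL - 2 := by
      rw [Real.logb_div (by linarith) (by norm_num)]
      rw [show (4:ℝ) = (2:ℝ)^(2:ℕ) by norm_num, logb_two_pow]
      push_cast; ring
    linarith
  have hc2 : (c:ℝ) + 2 ≤ (3/2) * LL := by
    have h1 : (c:ℝ) ≤ (Nat.log 2 k : ℝ) + 1 := by exact_mod_cast hck_nat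
    linarith
  -- x ≤ 8k
  have hx8k : x ≤ 8 * k := by
    have hLk : (L:ℝ) ≤ 4 * k + 3 := by
      have : L ≤ 4 * k + 3 := by omega
      exact_mod_cast this
    have : (1:ℝ) ≤ k := by exact_mod_cast hk1
    linarith
  -- g * x ≤ 8 n
  have hgx : (g:ℝ) * x ≤ 8 * n := by
    have hkg : (k:ℝ) * g ≤ n := by exact_mod_cast hg
    calc (g:ℝ) * x ≤ (g:ℝ) * (8 * k) := by
          apply mul_le_mul_of_nonneg_left hx8k (by positivity)
    _ = 8 * ((k:ℝ) * g) := by ring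
    _ ≤ 8 * n := by linarith
  -- r ≤ sqrt n
  have hr2 : (r:ℝ)^2 ≤ n := by
    have h1 : r^2 < 2^(4*k) := by
      calc r^2 = r * r := sq r
      _ < 2^(2*k) * 2^(2*k) := Nat.mul_lt_mul'' hr hr
      _ = 2^(4*k) := by rw [← pow_add]; congr 1; ring
    have h2 : (2:ℕ)^(4*k) ≤ 2^L := Nat.pow_le_pow_right (by norm_num) (by omega)
    have h3 : (2:ℕ)^L ≤ n := by rw [hL]; exact Nat.pow_log_le_self 2 (by omega)
    exact_mod_cast le_of_lt (lt_of_lt_of_le h1 (le_trans h2 h3))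
  have hrsqrt : (r:ℝ) ≤ Real.sqrt n := (Real.le_sqrt (by positivity) (by positivity)).2 hr2
  -- x ≤ 4 sqrt n
  have hsq : Real.sqrt n ^ 2 = (n:ℝ) := Real.sq_sqrt (le_of_lt hnpos)
  have hsqrtpos : 0 < Real.sqrt n := Real.sqrt_pos.2 hnpos
  have hlogn : Real.log n ≤ 2 * Real.sqrt n := by
    have h1 : Real.log n = 2 * Real.log (Real.sqrt n) := by
      conv_lhs => rw [← hsq]
      rw [Real.log_pow]
      push_cast; ring
    have h2 : Real.log (Real.sqrt n) ≤ Real.sqrt n - 1 :=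
      Real.log_le_sub_one_of_pos hsqrtpos
    linarith
  have hlog2 : (1/2 : ℝ) ≤ Real.log 2 := by
    have := Real.log_two_gt_d9
    linarith
  have hx4sqrt : x ≤ 4 * Real.sqrt n := by
    have hxdef : x = Real.log n / Real.log 2 := rfl
    rw [hxdef]
    rw [div_le_iff₀ (by linarith)]
    calc Real.log n ≤ 2 * Real.sqrt n := hlogn
    _ ≤ 4 * Real.sqrt n * (1/2) := by ring_nf; linarith
    _ ≤ 4 * Real.sqrt n * Real.log 2 := by
        apply mul_le_mul_of_nonneg_left hlog2 (by positivity)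
  have hrx : (r:ℝ) * x ≤ 4 * n := by
    calc (r:ℝ) * x ≤ Real.sqrt n * (4 * Real.sqrt n) := by
          apply mul_le_mul hrsqrt hx4sqrt (le_of_lt hxpos) (by positivity)
    _ = 4 * (Real.sqrt n ^ 2) := by ring
    _ = 4 * n := by rw [hsq]
  -- final
  rw [le_div_iff₀ hxpos]
  push_cast
  calc ((g:ℝ) * ((c:ℝ) + 2) + (r:ℝ)) * x = (g:ℝ) * ((c:ℝ)+2) * x + (r:ℝ) * x := by ring
  _ ≤ 12 * n * LL + 8 * n * LL := by
      apply add_le_add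
      · calc (g:ℝ) * ((c:ℝ)+2) * x = ((g:ℝ)*x) * ((c:ℝ)+2) := by ring
        _ ≤ (8*n) * ((c:ℝ)+2) := mul_le_mul_of_nonneg_right hgx (by positivity)
        _ ≤ (8*n) * ((3/2)*LL) := mul_le_mul_of_nonneg_left hc2 (by positivity)
        _ = 12 * n * LL := by ring
      · calc (r:ℝ) * x ≤ 4 * n := hrx
        _ ≤ 8 * n * LL := by nlinarith [hnpos, hLL2]
  _ = 20 * n * LL := by ring


end Helpers

/-- Assuming every `m`-point set in general position contains `⌊log₂ m / 2⌋`
points in convex position, every set of `n > 16` points in general position can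
be separated by at most `20 n log₂ log₂ n / log₂ n` convex sets. -/
theorem convex_general_position_upper_bound (n : ℕ) (hn : 16 < n)
    (hES : ∀ m : ℕ, ∀ T : Finset Pt, T.card = m → GenPos T →
      ∃ Q ⊆ T, Q.card = Nat.log 2 m / 2 ∧ ConvexPos Q)
    (P : Finset Pt) (hP : P.card = n) (hgp : GenPos P) :
    ∃ S : Finset (Set Pt), (∀ A ∈ S, Convex ℝ A) ∧ SepPts S P ∧
      (S.card : ℝ) ≤ 20 * n * Real.logb 2 (Real.logb 2 n) / Real.logb 2 n := by
  classical
  set L := Nat.log 2 n with hLdef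
  set k := L / 4 with hkdef
  have hL4 : 4 ≤ L := by
    rw [hLdef]
    have h16 : (2:ℕ)^4 ≤ n := by norm_num; omega
    exact (Nat.le_log_iff_pow_le (by norm_num) (by omega)).2 h16
  have hk1 : 0 < k := by omega
  set c := Nat.clog 2 k with hcdef
  -- extraction hypothesis
  have hex : ∀ T : Finset Pt, T ⊆ P → 2^(2*k) ≤ T.card →
      ∃ Q ⊆ T, Q.card = k ∧ ConvexPos Q := by
    intro T hTP hTcard
    obtain ⟨Q, hQT, hQcard, hQpos⟩ := hES T.card T rfl (genPos_mono hTP hgp)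
    have hpow : 0 < 2^(2*k) := pow_pos (by norm_num) _
    have hTne : T.card ≠ 0 := by omega
    have h2k : 2*k ≤ Nat.log 2 T.card := (Nat.le_log_iff_pow_le (by norm_num) hTne).2 hTcard
    obtain ⟨Q', hQ'Q, hQ'card⟩ := Finset.exists_subset_card_eq (s := Q) (n := k) (by omega)
    exact ⟨Q', hQ'Q.trans hQT, hQ'card, convexPos_mono hQ'Q hQpos⟩
  obtain ⟨𝒬, R, hgroups, hdisj, hRsub, hRcard, hcov⟩ :=
    extract P k hk1 hex P.card P le_rfl (Finset.Subset.refl P)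
  -- minimal distance for discs
  have hPcard2 : 2 ≤ P.card := by omega
  have hodne : P.offDiag.Nonempty := by
    obtain ⟨a, ha, b, hb, hab⟩ := Finset.one_lt_card.1 hPcard2
    exact ⟨(a, b), Finset.mem_offDiag.2 ⟨ha, hb, hab⟩⟩
  set D := P.offDiag.image (fun p => dist p.1 p.2) with hD
  have hDne : D.Nonempty := hodne.image _
  set δ := D.min' hDne with hδdef
  have hδpos : 0 < δ := by
    obtain ⟨p, hp, hpd⟩ := Finset.mem_image.1 (D.min'_mem hDne)
    rw [hδdef, ← hpd]
    exact dist_pos.2 (Finset.mem_offDiag.1 hp).2.2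
  have hδle : ∀ x ∈ P, ∀ y ∈ P, x ≠ y → δ ≤ dist x y := by
    intro x hx y hy hxy
    exact D.min'_le _ (Finset.mem_image.2 ⟨(x, y), Finset.mem_offDiag.2 ⟨hx, hy, hxy⟩, rfl⟩)
  -- the family
  set F := 𝒬.biUnion (fun Q => groupFam P Q c) ∪
    R.image (fun y => Metric.closedBall y (δ/2)) with hF
  have hdisc_sep : ∀ x ∈ R, ∀ y ∈ P, x ≠ y →
      ∃ S ∈ F, x ∈ S ∧ y ∉ S := by
    intro x hx y hy hxy
    refine ⟨Metric.closedBall x (δ/2), Finset.mem_union_right _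
      (Finset.mem_image.2 ⟨x, hx, rfl⟩), Metric.mem_closedBall_self (by positivity), ?_⟩
    rw [Metric.mem_closedBall]
    push_neg
    calc δ/2 < δ := by linarith
    _ ≤ dist y x := hδle y hy x (hRsub hx) hxy.symm
  have hgrp_mem : ∀ Q ∈ 𝒬, ∀ S ∈ groupFam P Q c, S ∈ F := by
    intro Q hQ S hS
    exact Finset.mem_union_left _ (Finset.mem_biUnion.2 ⟨Q, hQ, hS⟩)
  refine ⟨F, ?_, ?_, ?_⟩
  · -- convexity
    intro A hA
    rcases Finset.mem_union.1 hA with h | h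
    · obtain ⟨Q, hQ, hAQ⟩ := Finset.mem_biUnion.1 h
      exact groupFam_convex P Q c A hAQ
    · obtain ⟨y, _, rfl⟩ := Finset.mem_image.1 h
      exact convex_closedBall _ _
  · -- separation
    intro x hx y hy hxy
    rcases hcov x hx with hxR | ⟨Qx, hQx, hxQx⟩
    · obtain ⟨S, hS, hxS, hyS⟩ := hdisc_sep x hxR y hy hxy
      exact ⟨S, hS, iff_of_true hxS hyS⟩
    · rcases hcov y hy with hyR | ⟨Qy, hQy, hyQy⟩
      · obtain ⟨S, hS, hyS, hxS⟩ := hdisc_sep y hyR x hx hxy.symm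
        exact ⟨S, hS, iff_of_false hxS (not_not.2 hyS)⟩
      · by_cases hQQ : Qx = Qy
        · subst hQQ
          have hcards : Qx.card ≤ 2^c := by
            rw [(hgroups Qx hQx).2.1, hcdef]
            exact Nat.le_pow_clog (by norm_num) k
          obtain ⟨S, hS, hiff⟩ := groupFam_sep_in (hgroups Qx hQx).2.2 hcards hxQx hyQy hxy
          exact ⟨S, hgrp_mem Qx hQx S hS, hiff⟩
        · have hyP : y ∈ P := hy
          have hynQx : y ∉ Qx := by
            intro hcon
            exact (Finset.disjoint_left.1 (hdisj Qx hQx Qy hQy hQQ)) hcon hyQy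
          obtain ⟨S, hS, hiff⟩ := groupFam_sep_out (hgroups Qx hQx).2.2 c hxQx hyP hynQx
          exact ⟨S, hgrp_mem Qx hQx S hS, hiff⟩
  · -- cardinality
    have hcard1 : F.card ≤ 𝒬.card * (c + 2) + R.card := by
      refine le_trans (Finset.card_union_le _ _) ?_
      have hb : (𝒬.biUnion (fun Q => groupFam P Q c)).card ≤ 𝒬.card * (c + 2) := by
        refine le_trans (Finset.card_biUnion_le) ?_
        calc ∑ Q ∈ 𝒬, (groupFam P Q c).card ≤ ∑ _Q ∈ 𝒬, (c + 2) :=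
              Finset.sum_le_sum (fun Q _ => groupFam_card P Q c)
        _ = 𝒬.card * (c + 2) := by rw [Finset.sum_const, smul_eq_mul]
      have hi : (R.image (fun y => Metric.closedBall y (δ/2))).card ≤ R.card :=
        Finset.card_image_le
      omega
    have hkg : k * 𝒬.card ≤ n := by
      have hbi : (𝒬.biUnion id).card = ∑ Q ∈ 𝒬, Q.card := by
        apply Finset.card_biUnion
        intro Q hQ Q' hQ' hne
        exact hdisj Q hQ Q' hQ' hne
      have hsub : 𝒬.biUnion id ⊆ P := by
        intro a ha
        obtain ⟨Q, hQ, haQ⟩ := Finset.mem_biUnion.1 ha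
        exact (hgroups Q hQ).1 haQ
      have : ∑ Q ∈ 𝒬, Q.card = 𝒬.card * k := by
        rw [Finset.sum_congr rfl (fun Q hQ => (hgroups Q hQ).2.1), Finset.sum_const, smul_eq_mul]
      have hle := Finset.card_le_card hsub
      rw [hbi, this, hP] at hle
      rw [mul_comm]
      exact hle
    calc (F.card : ℝ) ≤ ((𝒬.card * (c + 2) + R.card : ℕ) : ℝ) := by exact_mod_cast hcard1
    _ ≤ 20 * n * Real.logb 2 (Real.logb 2 n) / Real.logb 2 n :=
        arith_bound n L k c 𝒬.card R.card (by omega) hLdef hkdef hcdef hkg hRcard
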